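/- arXiv:2001.00488 — 2 statements merged into one kernel-verified Lean document; each statement's English description precedes it below -/
import Mathlib

section
/- Let g be a Carnot Lie algebra of step n with dual g* = ⊕_{i=1}^n g_i*. Define ḡ = (⊕_{i=1}^n (g_i ⊕ g*_{n-i+1})) ⊕ ℝZ with bracket: [Z, x] = 0 for all x; [x,y]_ḡ = [x,y]_g for x, y ∈ g; [x,y]_ḡ = 0 for x, y ∈ g*; [x,y]_ḡ = 0 for x ∈ g_i*, y ∈ g_j with i < j; [x,y]_ḡ = j⟨x,y⟩Z for x ∈ g_j*, y ∈ g_j; and ⟨[x,y]_ḡ, z⟩ = ⟨x, [y,z]_g⟩ for x ∈ g_i*, y ∈ g_j, z ∈ g_{i-j} with i > j (where [x,y]_ḡ ∈ g*_{i-j}), with [y,x] := −[x,y]. Then this bracket satisfies the Jacobi identity, so ḡ is a Lie algebra. -/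
/-- The bracket on `ḡ = g ⊕ g* ⊕ ℝZ` built from a Carnot Lie algebra `g` of step `n`
(bracket of `g` on `g`; zero bracket on `g*` and on `Z`; `[ξ, y] = ξ ∘ ad(y)` in `g*`
together with the `Z`-component `∑_j j·⟨ξ_j, y_j⟩`, extending the defining formulas
`⟨[ξ,y],z⟩ = ⟨ξ,[y,z]⟩` for `ξ ∈ g_i*, y ∈ g_j, z ∈ g_{i-j}` and
`[ξ,y] = j⟨ξ,y⟩Z` for `ξ ∈ g_j*, y ∈ g_j`) is antisymmetric and satisfies the
Jacobi identity, hence `ḡ` is a Lie algebra. -/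
theorem gbar_jacobi
    (L : Type*) [LieRing L] [LieAlgebra ℝ L] (n : ℕ)
    (G : ℕ → Submodule ℝ L)
    (hinternal : DirectSum.IsInternal G)
    (hG0 : G 0 = ⊥)
    (hGtop : ∀ k, n < k → G k = ⊥)
    (hbrk : ∀ i j, ∀ x ∈ G i, ∀ y ∈ G j, ⁅x, y⁆ ∈ G (i + j))
    -- the graded projections `p i : g → g_i`
    (p : ℕ → L →ₗ[ℝ] L)
    (hp : ∀ i j, ∀ x ∈ G j, p i x = if i = j then x else 0)
    -- the bracket of `ḡ = g × g* × ℝZ`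
    (B : (L × Module.Dual ℝ L × ℝ) → (L × Module.Dual ℝ L × ℝ) → (L × Module.Dual ℝ L × ℝ))
    (hB : ∀ (x y : L) (ξ η : Module.Dual ℝ L) (s u : ℝ),
      B (x, ξ, s) (y, η, u) =
        (⁅x, y⁆,
         ξ.comp (LieAlgebra.ad ℝ L y) - η.comp (LieAlgebra.ad ℝ L x),
         ∑ j ∈ Finset.range (n + 1), (j : ℝ) * (ξ (p j y) - η (p j x)))) :
    (∀ a b, B a b = - B b a) ∧
    (∀ a b c, B a (B b c) + B b (B c a) + B c (B a b) = 0) := by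
  -- the grading derivation
  set D : L →ₗ[ℝ] L := ∑ j ∈ Finset.range (n + 1), (j : ℝ) • p j with hDdef
  have hDapp : ∀ w : L, D w = ∑ j ∈ Finset.range (n + 1), (j : ℝ) • p j w := by
    intro w
    simp [hDdef, LinearMap.sum_apply, LinearMap.smul_apply]
  have hD : ∀ a : ℕ, ∀ y ∈ G a, D y = (a : ℝ) • y := by
    intro a y hy
    rw [hDapp]
    have : ∀ j : ℕ, (j : ℝ) • p j y = if j = a then (a : ℝ) • y else 0 := by
      intro j
      rw [hp j a y hy]
      by_cases h : j = a <;> simp [h]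
    simp_rw [this]
    rw [Finset.sum_ite_eq' (Finset.range (n + 1)) a (fun _ => (a : ℝ) • y)]
    by_cases ha : a ∈ Finset.range (n + 1)
    · simp [ha]
    · have hna : n < a := by
        simp only [Finset.mem_range] at ha; omega
      have : y = 0 := by
        have := hGtop a hna ▸ hy
        simpa using this
      simp [ha, this]
  have htop : (⨆ i, G i) = ⊤ := hinternal.submodule_iSup_eq_top
  have key : ∀ y z : L, D ⁅y, z⁆ = ⁅D y, z⁆ + ⁅y, D z⁆ := by
    have main : ∀ y, y ∈ (⨆ i, G i) → ∀ z, z ∈ (⨆ i, G i) →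
        D ⁅y, z⁆ = ⁅D y, z⁆ + ⁅y, D z⁆ := by
      intro y hy
      induction hy using Submodule.iSup_induction' with
      | mem a y hya =>
        intro z hz
        induction hz using Submodule.iSup_induction' with
        | mem b z hzb =>
          have hbr : ⁅y, z⁆ ∈ G (a + b) := hbrk a b y hya z hzb
          rw [hD a y hya, hD b z hzb, hD (a + b) _ hbr]
          push_cast
          rw [add_smul, smul_lie, lie_smul]
        | zero => simp
        | add z₁ z₂ hz₁ hz₂ h1 h2 => simp only [lie_add, map_add, h1, h2]; abel
      | zero => intro z hz; simp
      | add y₁ y₂ hy₁ hy₂ h1 h2 =>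
        intro z hz
        simp only [add_lie, map_add, h1 z hz, h2 z hz]; abel
    intro y z
    exact main y (htop ▸ Submodule.mem_top) z (htop ▸ Submodule.mem_top)
  have hsum : ∀ (φ : Module.Dual ℝ L) (w : L),
      ∑ j ∈ Finset.range (n + 1), (j : ℝ) * φ (p j w) = φ (D w) := by
    intro φ w
    rw [hDapp, map_sum]
    simp [smul_eq_mul]
  constructor
  · rintro ⟨x, ξ, s⟩ ⟨y, η, u⟩
    rw [hB, hB]
    refine Prod.ext ?_ (Prod.ext ?_ ?_) <;>
      simp only [Prod.fst_neg, Prod.snd_neg]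
    · exact (lie_skew x y).symm
    · exact (neg_sub _ _).symm
    · rw [← Finset.sum_neg_distrib]
      exact Finset.sum_congr rfl fun j _ => by ring
  · rintro ⟨x, ξ, s⟩ ⟨y, η, u⟩ ⟨z, ζ, v⟩
    rw [hB y z, hB z x, hB x y, hB, hB, hB]
    refine Prod.ext ?_ (Prod.ext ?_ ?_)
    · simpa using lie_jacobi x y z
    · simp only [Prod.fst_add, Prod.snd_add, Prod.fst_zero, Prod.snd_zero]
      ext w
      simp only [LinearMap.add_apply, LinearMap.sub_apply, LinearMap.comp_apply,
        LieAlgebra.ad_apply, LinearMap.zero_apply, lie_lie, map_sub, map_add]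
      abel
    · simp only [Prod.snd_add, Prod.snd_zero, Prod.fst_add, Prod.fst_zero]
      simp only [mul_sub, Finset.sum_sub_distrib, hsum]
      simp only [LinearMap.sub_apply, LinearMap.comp_apply, LieAlgebra.ad_apply, key,
        map_add]
      have e1 : ξ ⁅z, D y⁆ = - ξ ⁅D y, z⁆ := by rw [← lie_skew, map_neg]
      have e2 : η ⁅x, D z⁆ = - η ⁅D z, x⁆ := by rw [← lie_skew, map_neg]
      have e3 : ζ ⁅y, D x⁆ = - ζ ⁅D x, y⁆ := by rw [← lie_skew, map_neg]
      rw [e1, e2, e3]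
      ring
end

section
/- With ḡ constructed as above from a Carnot Lie algebra g of step n, the grading ḡ_i = g_i ⊕ g*_{n-i+1} (for 1 ≤ i ≤ n) and ḡ_{n+1} = ℝZ satisfies [ḡ_i, ḡ_j] ⊆ ḡ_{i+j}, so ḡ is a Carnot Lie algebra of step n+1. -/
/-- The grading `ḡ_i = g_i ⊕ g*_{n-i+1}` (for `1 ≤ i ≤ n`) and `ḡ_{n+1} = ℝZ` on the
extension `ḡ = g ⊕ g* ⊕ ℝZ` of a Carnot Lie algebra `g` of step `n` satisfies
`[ḡ_i, ḡ_j] ⊆ ḡ_{i+j}`, so `ḡ` is a Carnot Lie algebra of step `n+1`. -/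
theorem gbar_carnot_grading
    (L : Type*) [LieRing L] [LieAlgebra ℝ L] (n : ℕ)
    (G : ℕ → Submodule ℝ L)
    (hinternal : DirectSum.IsInternal G)
    (hG0 : G 0 = ⊥)
    (hGtop : ∀ k, n < k → G k = ⊥)
    (hbrk : ∀ i j, ∀ x ∈ G i, ∀ y ∈ G j, ⁅x, y⁆ ∈ G (i + j))
    -- the graded projections `p i : g → g_i`
    (p : ℕ → L →ₗ[ℝ] L)
    (hp : ∀ i j, ∀ x ∈ G j, p i x = if i = j then x else 0)
    -- the bracket of `ḡ = g × g* × ℝZ`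
    (B : (L × Module.Dual ℝ L × ℝ) → (L × Module.Dual ℝ L × ℝ) → (L × Module.Dual ℝ L × ℝ))
    (hB : ∀ (x y : L) (ξ η : Module.Dual ℝ L) (s u : ℝ),
      B (x, ξ, s) (y, η, u) =
        (⁅x, y⁆,
         ξ.comp (LieAlgebra.ad ℝ L y) - η.comp (LieAlgebra.ad ℝ L x),
         ∑ j ∈ Finset.range (n + 1), (j : ℝ) * (ξ (p j y) - η (p j x))))
    -- the grading of `ḡ`
    (Gbar : ℕ → Submodule ℝ (L × Module.Dual ℝ L × ℝ))
    (hGbar0 : Gbar 0 = ⊥)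
    (hGbarMid : ∀ i, 1 ≤ i → i ≤ n → ∀ (x : L) (ξ : Module.Dual ℝ L) (s : ℝ),
      (x, ξ, s) ∈ Gbar i ↔
        x ∈ G i ∧ (∀ m, m ≠ n - i + 1 → ∀ z ∈ G m, ξ z = 0) ∧ s = 0)
    (hGbarTop : ∀ (x : L) (ξ : Module.Dual ℝ L) (s : ℝ),
      (x, ξ, s) ∈ Gbar (n + 1) ↔ x = 0 ∧ ξ = 0)
    (hGbarBig : ∀ k, n + 1 < k → Gbar k = ⊥) :
    ∀ i j, ∀ a ∈ Gbar i, ∀ b ∈ Gbar j, B a b ∈ Gbar (i + j) := by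
  intro i j a ha b hb
  obtain ⟨x, ξ, s⟩ := a
  obtain ⟨y, η, u⟩ := b
  -- a helper to show `B a b = 0` when the components are zero
  by_cases hi0 : i = 0
  · subst hi0; rw [hGbar0, Submodule.mem_bot, Prod.mk_eq_zero, Prod.mk_eq_zero] at ha
    obtain ⟨hx, hξ, hs⟩ := ha; subst hx; subst hξ; subst hs
    have hz : B (0, 0, 0) (y, η, u) = 0 := by
      rw [hB]; simp [Prod.mk_eq_zero]
    rw [hz]; exact zero_mem _
  by_cases hj0 : j = 0
  · subst hj0; rw [hGbar0, Submodule.mem_bot, Prod.mk_eq_zero, Prod.mk_eq_zero] at hb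
    obtain ⟨hy, hη, hu⟩ := hb; subst hy; subst hη; subst hu
    have hz : B (x, ξ, s) (0, 0, 0) = 0 := by
      rw [hB]; simp [Prod.mk_eq_zero]
    rw [hz]; exact zero_mem _
  by_cases hibig : n + 1 < i
  · rw [hGbarBig i hibig, Submodule.mem_bot, Prod.mk_eq_zero, Prod.mk_eq_zero] at ha
    obtain ⟨hx, hξ, hs⟩ := ha; subst hx; subst hξ; subst hs
    have hz : B (0, 0, 0) (y, η, u) = 0 := by
      rw [hB]; simp [Prod.mk_eq_zero]
    rw [hz]; exact zero_mem _
  by_cases hjbig : n + 1 < j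
  · rw [hGbarBig j hjbig, Submodule.mem_bot, Prod.mk_eq_zero, Prod.mk_eq_zero] at hb
    obtain ⟨hy, hη, hu⟩ := hb; subst hy; subst hη; subst hu
    have hz : B (x, ξ, s) (0, 0, 0) = 0 := by
      rw [hB]; simp [Prod.mk_eq_zero]
    rw [hz]; exact zero_mem _
  by_cases hin1 : i = n + 1
  · subst hin1
    obtain ⟨hx, hξ⟩ := (hGbarTop x ξ s).mp ha
    subst hx; subst hξ
    have hz : B (0, 0, s) (y, η, u) = 0 := by
      rw [hB]; simp [Prod.mk_eq_zero]
    rw [hz]; exact zero_mem _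
  by_cases hjn1 : j = n + 1
  · subst hjn1
    obtain ⟨hy, hη⟩ := (hGbarTop y η u).mp hb
    subst hy; subst hη
    have hz : B (x, ξ, s) (0, 0, u) = 0 := by
      rw [hB]; simp [Prod.mk_eq_zero]
    rw [hz]; exact zero_mem _
  -- now `1 ≤ i ≤ n` and `1 ≤ j ≤ n`
  have hi1 : 1 ≤ i := by omega
  have hin : i ≤ n := by omega
  have hj1 : 1 ≤ j := by omega
  have hjn : j ≤ n := by omega
  obtain ⟨hx, hξ, hs⟩ := (hGbarMid i hi1 hin x ξ s).mp ha
  obtain ⟨hy, hη, hu⟩ := (hGbarMid j hj1 hjn y η u).mp hb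
  subst hs; subst hu
  rw [hB]
  by_cases hmid : i + j ≤ n
  · -- middle case: `i + j ≤ n`
    refine (hGbarMid (i + j) (by omega) hmid _ _ _).mpr ⟨hbrk i j x hx y hy, ?_, ?_⟩
    · intro m hm z hz
      simp only [LinearMap.sub_apply, LinearMap.coe_comp, Function.comp_apply,
        LieAlgebra.ad_apply]
      rw [hξ (j + m) (by omega) _ (hbrk j m y hy z hz),
        hη (i + m) (by omega) _ (hbrk i m x hx z hz), sub_zero]
    · refine Finset.sum_eq_zero fun k _ => ?_
      have hξy : ξ y = 0 := hξ j (by omega) y hy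
      have hηx : η x = 0 := hη i (by omega) x hx
      rw [hp k j y hy, hp k i x hx]
      split_ifs <;> simp [hξy, hηx]
  by_cases hstep : i + j = n + 1
  · -- top case: `i + j = n + 1`
    rw [hstep]
    refine (hGbarTop _ _ _).mpr ⟨?_, ?_⟩
    · have h := hbrk i j x hx y hy
      rw [hGtop (i + j) (by omega), Submodule.mem_bot] at h
      exact h
    · rw [← LinearMap.ker_eq_top, ← top_le_iff, ← hinternal.submodule_iSup_eq_top]
      refine iSup_le fun m z hz => ?_
      simp only [LinearMap.mem_ker, LinearMap.sub_apply, LinearMap.coe_comp,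
        Function.comp_apply, LieAlgebra.ad_apply]
      rcases Nat.eq_zero_or_pos m with hm | hm
      · subst hm; rw [hG0, Submodule.mem_bot] at hz; subst hz; simp
      · rw [hξ (j + m) (by omega) _ (hbrk j m y hy z hz),
          hη (i + m) (by omega) _ (hbrk i m x hx z hz), sub_zero]
  · -- big case: `i + j ≥ n + 2`, everything vanishes
    rw [hGbarBig (i + j) (by omega), Submodule.mem_bot, Prod.mk_eq_zero, Prod.mk_eq_zero]
    refine ⟨?_, ?_, ?_⟩
    · have h := hbrk i j x hx y hy
      rw [hGtop (i + j) (by omega), Submodule.mem_bot] at h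
      exact h
    · rw [← LinearMap.ker_eq_top, ← top_le_iff, ← hinternal.submodule_iSup_eq_top]
      refine iSup_le fun m z hz => ?_
      simp only [LinearMap.mem_ker, LinearMap.sub_apply, LinearMap.coe_comp,
        Function.comp_apply, LieAlgebra.ad_apply]
      rcases Nat.eq_zero_or_pos m with hm | hm
      · subst hm; rw [hG0, Submodule.mem_bot] at hz; subst hz; simp
      · rw [hξ (j + m) (by omega) _ (hbrk j m y hy z hz),
          hη (i + m) (by omega) _ (hbrk i m x hx z hz), sub_zero]
    · refine Finset.sum_eq_zero fun k _ => ?_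
      have hξy : ξ y = 0 := hξ j (by omega) y hy
      have hηx : η x = 0 := hη i (by omega) x hx
      rw [hp k j y hy, hp k i x hx]
      split_ifs <;> simp [hξy, hηx]
end
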